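/- For every m ≥ 3, the strong product P_m ⊠ K_3 of a path on m vertices with a complete graph on 3 vertices is a connected locally Dirac graph of order 3m with diameter m − 1. -/

import Mathlib

noncomputable def locDeg {V : Type*} (G : SimpleGraph V) (v u : V) : ℕ :=
  (G.neighborSet v ∩ G.neighborSet u).ncard

noncomputable def degN {V : Type*} (G : SimpleGraph V) (v : V) : ℕ :=
  (G.neighborSet v).ncard

def LocallyDirac {V : Type*} (G : SimpleGraph V) : Prop :=
  ∀ v u : V, G.Adj v u → degN G v ≤ 2 * locDeg G v u

/-- The strong product `G ⊠ H`. -/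
def strongProd {α β : Type*} (G : SimpleGraph α) (H : SimpleGraph β) :
    SimpleGraph (α × β) where
  Adj a b :=
    (a.1 = b.1 ∧ H.Adj a.2 b.2) ∨ (a.2 = b.2 ∧ G.Adj a.1 b.1) ∨
      (G.Adj a.1 b.1 ∧ H.Adj a.2 b.2)
  symm := by
    constructor
    rintro a b (⟨h1, h2⟩ | ⟨h1, h2⟩ | ⟨h1, h2⟩)
    · exact Or.inl ⟨h1.symm, h2.symm⟩
    · exact Or.inr (Or.inl ⟨h1.symm, h2.symm⟩)
    · exact Or.inr (Or.inr ⟨h1.symm, h2.symm⟩)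
  loopless := by
    constructor
    rintro a (⟨-, h⟩ | ⟨-, h⟩ | ⟨h, -⟩) <;> exact h.ne rfl

open SimpleGraph

private abbrev SPk (k : ℕ) : SimpleGraph (Fin (k+1) × Fin 3) :=
  strongProd (SimpleGraph.pathGraph (k+1)) (⊤ : SimpleGraph (Fin 3))

private lemma sp_adj_of_padj {k : ℕ} {i x : Fin (k+1)}
    (h : (pathGraph (k+1)).Adj i x) (b y : Fin 3) : (SPk k).Adj (i, b) (x, y) := by
  by_cases hy : b = y
  · exact Or.inr (Or.inl ⟨hy, h⟩)
  · exact Or.inr (Or.inr ⟨h, hy⟩)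

private lemma sp_connected (k : ℕ) : (SPk k).Connected := by
  refine ⟨fun u v => ?_⟩
  obtain ⟨a, b⟩ := u
  obtain ⟨c, d⟩ := v
  have h1 : (SPk k).Reachable (a, b) (c, b) :=
    ((SimpleGraph.pathGraph_connected k).preconnected a c).map
      ⟨fun i => (i, b), fun h => Or.inr (Or.inl ⟨rfl, h⟩)⟩
  refine h1.trans ?_
  by_cases hbd : b = d
  · subst hbd; exact Reachable.refl _
  · exact (Adj.reachable (Or.inl ⟨rfl, hbd⟩))

/-- every path vertex has a neighbor -/
private lemma exists_pnbr {k : ℕ} (hk : 1 ≤ k) (i : Fin (k+1)) :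
    ∃ x : Fin (k+1), (pathGraph (k+1)).Adj i x := by
  by_cases h : i.val < k
  · refine ⟨i + 1, ?_⟩
    rw [pathGraph_adj]
    left
    rw [Fin.val_add_one_of_lt (by simpa [Fin.lt_def] using h)]
  · have hik : i.val = k := by omega
    refine ⟨i - 1, ?_⟩
    rw [pathGraph_adj]
    right
    have hi0 : i ≠ 0 := by
      intro h0; rw [h0] at hik; simp at hik; omega
    rw [Fin.coe_sub_one, if_neg hi0]
    omega

/-- neighbor's first coordinate forms -/
private lemma padj_cases {k : ℕ} {i x : Fin (k+1)} (h : (pathGraph (k+1)).Adj i x) :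
    x = i + 1 ∨ x = i - 1 := by
  rw [pathGraph_adj] at h
  rcases h with h | h
  · left
    apply Fin.ext
    rw [Fin.val_add_one_of_lt]
    · omega
    · rw [Fin.lt_def]; simp only [Fin.val_last]; omega
  · right
    have : x + 1 = i := by
      apply Fin.ext
      rw [Fin.val_add_one_of_lt]
      · omega
      · rw [Fin.lt_def]; simp only [Fin.val_last]; omega
    exact eq_sub_of_add_eq this

private lemma fin3_cases : ∀ b y : Fin 3, y ≠ b → y = b + 1 ∨ y = b + 2 := by decide

private lemma ncard_le_succ {α : Type*} {s : Set α} {a : α} {n : ℕ} (h : s.ncard ≤ n) :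
    (insert a s).ncard ≤ n + 1 :=
  le_trans (Set.ncard_insert_le _ _) (by omega)

private lemma degN_le_8 {k : ℕ} (i : Fin (k+1)) (b : Fin 3) :
    degN (SPk k) (i, b) ≤ 8 := by
  have hsub : (SPk k).neighborSet (i, b) ⊆
      {(i, b+1), (i, b+2), (i-1, 0), (i-1, 1), (i-1, 2), (i+1, 0), (i+1, 1), (i+1, 2)} := by
    rintro ⟨x, y⟩ h
    rcases h with ⟨h1, h2⟩ | ⟨h1, h2⟩ | ⟨h2, h3⟩
    · simp only [top_adj] at h2
      have h1' : i = x := h1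
      subst h1'
      rcases fin3_cases b y (Ne.symm h2) with rfl | rfl
      · exact Or.inl rfl
      · exact Or.inr (Or.inl rfl)
    · rcases padj_cases h2 with rfl | rfl
      · rcases (by decide : ∀ y : Fin 3, y = 0 ∨ y = 1 ∨ y = 2) y with rfl | rfl | rfl <;> simp
      · rcases (by decide : ∀ y : Fin 3, y = 0 ∨ y = 1 ∨ y = 2) y with rfl | rfl | rfl <;> simp
    · rcases padj_cases h2 with rfl | rfl
      · rcases (by decide : ∀ y : Fin 3, y = 0 ∨ y = 1 ∨ y = 2) y with rfl | rfl | rfl <;> simp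
      · rcases (by decide : ∀ y : Fin 3, y = 0 ∨ y = 1 ∨ y = 2) y with rfl | rfl | rfl <;> simp
  refine le_trans (Set.ncard_le_ncard hsub (Set.toFinite _)) ?_
  exact ncard_le_succ (ncard_le_succ (ncard_le_succ (ncard_le_succ (ncard_le_succ
    (ncard_le_succ (ncard_le_succ (le_of_eq (Set.ncard_singleton _))))))))

private lemma fin3_third : ∀ b d : Fin 3, b ≠ d → (-b-d) ≠ b ∧ (-b-d) ≠ d := by decide

private lemma fin3_ne : ∀ b : Fin 3, b + 1 ≠ b + 2 ∧ b ≠ b + 1 ∧ b ≠ b + 2 := by decide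

private lemma four_le_locDeg_same {k : ℕ} (hk : 1 ≤ k) (i : Fin (k+1)) (b d : Fin 3)
    (hbd : b ≠ d) : 4 ≤ locDeg (SPk k) (i, b) (i, d) := by
  obtain ⟨x, hx⟩ := exists_pnbr hk i
  set e : Fin 3 := -b - d with he
  obtain ⟨he1, he2⟩ := fin3_third b d hbd
  have hxi : i ≠ x := hx.ne
  have hsub : ({(i, e), (x, 0), (x, 1), (x, 2)} : Set (Fin (k+1) × Fin 3)) ⊆
      (SPk k).neighborSet (i, b) ∩ (SPk k).neighborSet (i, d) := by
    rintro p (rfl | rfl | rfl | rfl)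
    · exact ⟨Or.inl ⟨rfl, Ne.symm he1⟩, Or.inl ⟨rfl, Ne.symm he2⟩⟩
    · exact ⟨sp_adj_of_padj hx b 0, sp_adj_of_padj hx d 0⟩
    · exact ⟨sp_adj_of_padj hx b 1, sp_adj_of_padj hx d 1⟩
    · exact ⟨sp_adj_of_padj hx b 2, sp_adj_of_padj hx d 2⟩
  have hT : ({(i, e), (x, 0), (x, 1), (x, 2)} : Set (Fin (k+1) × Fin 3)).ncard = 4 := by
    rw [Set.ncard_insert_of_notMem (by simp [Prod.ext_iff, hxi]),
      Set.ncard_insert_of_notMem (by simp [Prod.ext_iff]),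
      Set.ncard_insert_of_notMem (by simp [Prod.ext_iff]), Set.ncard_singleton]
  calc 4 = ({(i, e), (x, 0), (x, 1), (x, 2)} : Set (Fin (k+1) × Fin 3)).ncard := hT.symm
    _ ≤ _ := Set.ncard_le_ncard hsub (Set.toFinite _)

private lemma four_le_locDeg_path {k : ℕ} (i j : Fin (k+1)) (b d : Fin 3)
    (hp : (pathGraph (k+1)).Adj i j) : 4 ≤ locDeg (SPk k) (i, b) (j, d) := by
  have hij : i ≠ j := hp.ne
  have hsub : ({(i, b+1), (i, b+2), (j, d+1), (j, d+2)} : Set (Fin (k+1) × Fin 3)) ⊆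
      (SPk k).neighborSet (i, b) ∩ (SPk k).neighborSet (j, d) := by
    rintro p (rfl | rfl | rfl | rfl)
    · exact ⟨Or.inl ⟨rfl, (fin3_ne b).2.1⟩, sp_adj_of_padj hp.symm d (b+1)⟩
    · exact ⟨Or.inl ⟨rfl, (fin3_ne b).2.2⟩, sp_adj_of_padj hp.symm d (b+2)⟩
    · exact ⟨sp_adj_of_padj hp b (d+1), Or.inl ⟨rfl, (fin3_ne d).2.1⟩⟩
    · exact ⟨sp_adj_of_padj hp b (d+2), Or.inl ⟨rfl, (fin3_ne d).2.2⟩⟩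
  have hT : ({(i, b+1), (i, b+2), (j, d+1), (j, d+2)} : Set (Fin (k+1) × Fin 3)).ncard = 4 := by
    rw [Set.ncard_insert_of_notMem (by simp [Prod.ext_iff, hij, (fin3_ne b).1]),
      Set.ncard_insert_of_notMem (by simp [Prod.ext_iff, hij]),
      Set.ncard_insert_of_notMem (by simp [Prod.ext_iff, (fin3_ne d).1]),
      Set.ncard_singleton]
  calc 4 = ({(i, b+1), (i, b+2), (j, d+1), (j, d+2)} : Set (Fin (k+1) × Fin 3)).ncard := hT.symm
    _ ≤ _ := Set.ncard_le_ncard hsub (Set.toFinite _)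

private lemma sp_locallyDirac {k : ℕ} (hk : 1 ≤ k) : LocallyDirac (SPk k) := by
  rintro ⟨i, b⟩ ⟨j, d⟩ h
  have h8 := degN_le_8 (k := k) i b
  have h4 : 4 ≤ locDeg (SPk k) (i, b) (j, d) := by
    rcases h with ⟨h1, h2⟩ | ⟨h1, h2⟩ | ⟨h2, h3⟩
    · have h1' : i = j := h1
      subst h1'
      exact four_le_locDeg_same hk i b d (by simpa using h2)
    · exact four_le_locDeg_path i j b d h2
    · exact four_le_locDeg_path i j b d h2
  omega

private lemma dist_aux {k : ℕ} : ∀ (n : ℕ), 1 ≤ n → ∀ (a c : Fin (k+1)) (b d : Fin 3),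
    c.val = a.val + n → (SPk k).dist (a, b) (c, d) ≤ n := by
  intro n
  induction n with
  | zero => omega
  | succ n ih =>
    intro _ a c b d hc
    have hck := c.isLt
    by_cases hn : n = 0
    · subst hn
      have hadj : (pathGraph (k+1)).Adj a c := by rw [pathGraph_adj]; omega
      exact le_of_eq (dist_eq_one_iff_adj.mpr (sp_adj_of_padj hadj b d))
    · have ha' : (a + 1).val = a.val + 1 :=
        Fin.val_add_one_of_lt (by rw [Fin.lt_def]; simp only [Fin.val_last]; omega)
      have hadj : (pathGraph (k+1)).Adj a (a + 1) := by rw [pathGraph_adj]; omega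
      have h2 := ih (by omega) (a + 1) c b d (by omega)
      have h3 : (SPk k).dist (a, b) (a + 1, b) = 1 :=
        dist_eq_one_iff_adj.mpr (sp_adj_of_padj hadj b b)
      have htri := (sp_connected k).dist_triangle (u := ((a, b) : Fin (k+1) × Fin 3))
        (v := (a + 1, b)) (w := (c, d))
      omega

private lemma walk_bound {k : ℕ} : ∀ {u v : Fin (k+1) × Fin 3} (w : (SPk k).Walk u v),
    v.1.val ≤ u.1.val + w.length := by
  intro u v w
  induction w with
  | nil => simp
  | @cons u x v h p ih =>
    have hx : x.1.val ≤ u.1.val + 1 := by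
      rcases h with ⟨h1, -⟩ | ⟨-, h1⟩ | ⟨h1, -⟩
      · have : u.1.val = x.1.val := by rw [h1]
        omega
      · rw [pathGraph_adj] at h1; omega
      · rw [pathGraph_adj] at h1; omega
    simp only [SimpleGraph.Walk.length_cons]
    omega

theorem stmt7 (m : ℕ) (hm : 3 ≤ m) :
    (strongProd (SimpleGraph.pathGraph m) (⊤ : SimpleGraph (Fin 3))).Connected ∧
    LocallyDirac (strongProd (SimpleGraph.pathGraph m) (⊤ : SimpleGraph (Fin 3))) ∧
    Fintype.card (Fin m × Fin 3) = 3 * m ∧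
    (∀ u v : Fin m × Fin 3,
      (strongProd (SimpleGraph.pathGraph m) (⊤ : SimpleGraph (Fin 3))).dist u v ≤ m - 1) ∧
    (∃ u v : Fin m × Fin 3,
      (strongProd (SimpleGraph.pathGraph m) (⊤ : SimpleGraph (Fin 3))).dist u v = m - 1) := by
  obtain ⟨k, rfl⟩ : ∃ k, m = k + 1 := ⟨m - 1, by omega⟩
  have hk : 2 ≤ k := by omega
  refine ⟨sp_connected k, sp_locallyDirac (by omega), by simp [Fintype.card_prod, mul_comm], ?_, ?_⟩
  · rintro ⟨a, b⟩ ⟨c, d⟩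
    simp only [Nat.add_sub_cancel]
    have hak := a.isLt
    have hck := c.isLt
    rcases lt_trichotomy a.val c.val with h | h | h
    · exact le_trans (dist_aux (c.val - a.val) (by omega) a c b d (by omega)) (by omega)
    · have hac : a = c := Fin.ext h
      subst hac
      by_cases hbd : b = d
      · subst hbd
        simp [SimpleGraph.dist_self]
      · have h1 : (SPk k).dist (a, b) (a, d) = 1 :=
          dist_eq_one_iff_adj.mpr (Or.inl ⟨rfl, by simpa using hbd⟩)
        exact h1.le.trans (by omega)
    · rw [SimpleGraph.dist_comm]
      exact le_trans (dist_aux (a.val - c.val) (by omega) c a d b (by omega)) (by omega)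
  · refine ⟨(0, 0), (⟨k, by omega⟩, 0), ?_⟩
    simp only [Nat.add_sub_cancel]
    have hub : (SPk k).dist (0, 0) (⟨k, by omega⟩, 0) ≤ k :=
      dist_aux k (by omega) 0 ⟨k, by omega⟩ 0 0 (by simp)
    have hlb : k ≤ (SPk k).dist (0, 0) (⟨k, by omega⟩, 0) := by
      obtain ⟨w, hw⟩ := (sp_connected k).exists_walk_length_eq_dist (0, 0) (⟨k, by omega⟩, 0)
      have hb := walk_bound w
      simp only at hb
      rw [hw] at hb
      simpa using hb
    exact le_antisymm hub hlb
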